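/- Every k-uniform hypergraph F (k ≥ 2) with m vertices and at least a·C(m,k) edges contains a tight path on at least a·m/k vertices. -/

import Mathlib

open Finset

variable {V : Type} [Fintype V] [DecidableEq V]

/-- candidate extensions of a (k-1)-set S in G -/
def cand (G : Finset (Finset V)) (S : Finset V) : Finset V :=
  univ.filter (fun v => v ∉ S ∧ insert v S ∈ G)

lemma cand_card {k : ℕ} (G : Finset (Finset V))
    (hG : ∀ e ∈ G, e.card = k) {S : Finset V} (hS : S.card = k - 1) (hk : 1 ≤ k) :
    (cand G S).card = (G.filter (fun e => S ⊆ e)).card := by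
  apply Finset.card_nbij (fun v => insert v S)
  · intro v hv
    simp only [cand, mem_coe, mem_filter, mem_univ, true_and] at hv
    simp [mem_filter, hv.2]
  · intro v hv w hw h
    simp only [cand, coe_filter, Set.mem_setOf_eq] at hv hw
    simp only at h
    have : v ∈ insert w S := h ▸ Finset.mem_insert_self v S
    rcases Finset.mem_insert.mp this with h' | h'
    · exact h'
    · exact absurd h' hv.2.1
  · intro e he
    simp only [coe_filter, Set.mem_setOf_eq] at he
    obtain ⟨heG, hSe⟩ := he
    have hcard : (e \ S).card = 1 := by
      rw [Finset.card_sdiff_of_subset hSe, hG e heG, hS]; omega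
    obtain ⟨v, hv⟩ := Finset.card_eq_one.mp hcard
    have hvS : v ∉ S := by
      have : v ∈ e \ S := hv ▸ Finset.mem_singleton_self v
      exact (Finset.mem_sdiff.mp this).2
    have hins : insert v S = e := by
      rw [Finset.insert_eq, ← hv, Finset.sdiff_union_of_subset hSe]
    refine ⟨v, ?_, hins⟩
    simp only [cand, coe_filter, Set.mem_setOf_eq, Set.mem_univ, mem_univ, true_and]
    exact ⟨hvS, hins ▸ heG⟩


lemma exists_min_deg (k t : ℕ) (hk : 1 ≤ k) :
    ∀ n (G : Finset (Finset V)), G.card ≤ n → (∀ e ∈ G, e.card = k) →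
    (t - 1) * (((univ : Finset V).powersetCard (k-1)).filter
        (fun S => ∃ e ∈ G, S ⊆ e)).card < G.card →
    ∃ G', G' ⊆ G ∧ G'.Nonempty ∧ (∀ e ∈ G', e.card = k) ∧
      ∀ S : Finset V, S.card = k - 1 → (∃ e ∈ G', S ⊆ e) → t ≤ (cand G' S).card := by
  intro n
  induction n with
  | zero => intro G hc _ hlt; omega
  | succ n ih =>
    intro G hc hG hlt
    by_cases hall : ∀ S : Finset V, S.card = k - 1 → (∃ e ∈ G, S ⊆ e) → t ≤ (cand G S).card
    · exact ⟨G, Finset.Subset.rfl, Finset.card_pos.mp (by omega), hG, hall⟩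
    · push_neg at hall
      obtain ⟨S, hS, hSe, hSdeg⟩ := hall
      set A := (((univ : Finset V).powersetCard (k-1)).filter
        (fun S => ∃ e ∈ G, S ⊆ e)) with hA
      set G₂ := G.filter (fun e => ¬ S ⊆ e) with hG₂
      set A₂ := (((univ : Finset V).powersetCard (k-1)).filter
        (fun S' => ∃ e ∈ G₂, S' ⊆ e)) with hA₂
      have hdegcard : (G.filter (fun e => S ⊆ e)).card = (cand G S).card :=
        (cand_card G hG hS hk).symm
      have hsplit : (G.filter (fun e => S ⊆ e)).card + G₂.card = G.card :=
        Finset.card_filter_add_card_filter_not _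
      have hdeg1 : 1 ≤ (G.filter (fun e => S ⊆ e)).card := by
        obtain ⟨e, heG, hSe'⟩ := hSe
        exact Finset.card_pos.mpr ⟨e, Finset.mem_filter.mpr ⟨heG, hSe'⟩⟩
      have hdegle : (G.filter (fun e => S ⊆ e)).card ≤ t - 1 := by omega
      have hG₂sub : G₂ ⊆ G := Finset.filter_subset _ _
      have hG₂k : ∀ e ∈ G₂, e.card = k := fun e he => hG e (hG₂sub he)
      -- A₂ ⊆ A.erase S
      have hSA : S ∈ A := by
        simp only [hA, mem_filter, Finset.mem_powersetCard]
        exact ⟨⟨Finset.subset_univ _, hS⟩, hSe⟩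
      have hA₂sub : A₂ ⊆ A.erase S := by
        intro S' hS'
        simp only [hA₂, mem_filter, Finset.mem_powersetCard] at hS'
        obtain ⟨⟨hsu, hsc⟩, e, heG₂, hse⟩ := hS'
        have heS : ¬ S ⊆ e := (Finset.mem_filter.mp heG₂).2
        refine Finset.mem_erase.mpr ⟨?_, ?_⟩
        · rintro rfl; exact heS hse
        · simp only [hA, mem_filter, Finset.mem_powersetCard]
          exact ⟨⟨hsu, hsc⟩, e, hG₂sub heG₂, hse⟩
      have hA₂lt : A₂.card + 1 ≤ A.card := by
        have h1 := Finset.card_le_card hA₂sub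
        have h2 : (A.erase S).card = A.card - 1 := Finset.card_erase_of_mem hSA
        have h3 : 1 ≤ A.card := Finset.card_pos.mpr ⟨S, hSA⟩
        omega
      have hlt₂ : (t - 1) * A₂.card < G₂.card := by
        have h4 : (t-1) * (A₂.card + 1) ≤ (t-1) * A.card := Nat.mul_le_mul_left _ hA₂lt
        have h5 : (t-1) * (A₂.card + 1) = (t-1) * A₂.card + (t-1) := by ring
        have h6 : G.card ≤ G₂.card + (t-1) := by omega
        omega
      obtain ⟨G', hsub', hne', hk', hdeg'⟩ := ih G₂ (by omega) hG₂k hlt₂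
      exact ⟨G', hsub'.trans hG₂sub, hne', hk', hdeg'⟩
lemma exists_path (k t : ℕ) (hk : 2 ≤ k) (ht : 1 ≤ t)
    (G : Finset (Finset V)) (hG : ∀ e ∈ G, e.card = k) (hne : G.Nonempty)
    (hdeg : ∀ S : Finset V, S.card = k - 1 → (∃ e ∈ G, S ⊆ e) → t ≤ (cand G S).card) :
    ∃ L : List V, L.Nodup ∧ (∀ i, i + k ≤ L.length → ((L.drop i).take k).toFinset ∈ G) ∧
      L.length = t + k - 1 := by
  have key : ∀ l, k ≤ l → l ≤ t + k - 1 →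
      ∃ L : List V, L.Nodup ∧ (∀ i, i + k ≤ L.length → ((L.drop i).take k).toFinset ∈ G) ∧
        L.length = l := by
    intro l hl
    induction l, hl using Nat.le_induction with
    | base =>
      intro _
      obtain ⟨e, he⟩ := hne
      have hlen : e.toList.length = k := by simp [hG e he]
      refine ⟨e.toList, e.nodup_toList, ?_, hlen⟩
      intro i hi
      have hi0 : i = 0 := by omega
      subst hi0
      simp only [List.drop_zero]
      rw [List.take_of_length_le (by omega)]
      simpa using he
    | succ l hl ih =>
      intro hle
      obtain ⟨L, hnd, htight, hlen⟩ := ih (by omega)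
      set S := (L.drop (l - (k-1))).toFinset with hSdef
      have hdroplen : (L.drop (l - (k-1))).length = k - 1 := by
        rw [List.length_drop, hlen]; omega
      have hSnd : (L.drop (l - (k-1))).Nodup := (List.drop_sublist _ _).nodup hnd
      have hScard : S.card = k - 1 := by
        rw [hSdef, List.toFinset_card_of_nodup hSnd, hdroplen]
      -- last edge of path
      have hEdge : ((L.drop (l - k)).take k).toFinset ∈ G := htight (l - k) (by omega)
      have hdroplen2 : (L.drop (l - k)).length = k := by rw [List.length_drop, hlen]; omega
      have hEdge' : (L.drop (l - k)).toFinset ∈ G := by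
        rwa [List.take_of_length_le (le_of_eq hdroplen2)] at hEdge
      have hdd : L.drop (l - (k-1)) = (L.drop (l - k)).drop 1 := by
        rw [List.drop_drop]; congr 1; omega
      have hSE : S ⊆ (L.drop (l - k)).toFinset := by
        intro v hv
        rw [hSdef, List.mem_toFinset, hdd] at hv
        exact List.mem_toFinset.mpr ((List.drop_sublist _ _).subset hv)
      have hcand : t ≤ (cand G S).card := hdeg S hScard ⟨_, hEdge', hSE⟩
      have hSL : S ⊆ L.toFinset := by
        intro v hv
        rw [hSdef, List.mem_toFinset] at hv
        exact List.mem_toFinset.mpr ((List.drop_sublist _ _).subset hv)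
      have hLcard : L.toFinset.card = l := by
        rw [List.toFinset_card_of_nodup hnd, hlen]
      have hsd : (L.toFinset \ S).card = l - (k-1) := by
        rw [Finset.card_sdiff_of_subset hSL, hLcard, hScard]
      -- find a fresh vertex
      have : ∃ v ∈ cand G S, v ∉ L.toFinset := by
        by_contra hcon
        push_neg at hcon
        have hsub : cand G S ⊆ L.toFinset \ S := by
          intro v hv
          have hv' := hv
          simp only [cand, mem_filter, mem_univ, true_and] at hv'
          exact Finset.mem_sdiff.mpr ⟨hcon v hv, hv'.1⟩
        have := Finset.card_le_card hsub
        omega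
      obtain ⟨v, hvcand, hvL⟩ := this
      have hvmem : v ∉ S ∧ insert v S ∈ G := by
        simpa [cand, mem_filter] using hvcand
      have hvL' : v ∉ L := fun h => hvL (List.mem_toFinset.mpr h)
      refine ⟨L ++ [v], ?_, ?_, by simp [hlen]⟩
      · simp [List.nodup_append, hnd, hvL']; exact fun a ha h => hvL' (h ▸ ha)
      · intro i hi
        rw [List.length_append, List.length_singleton, hlen] at hi
        have hdropapp : (L ++ [v]).drop i = L.drop i ++ [v] :=
          List.drop_append_of_le_length (by omega)
        by_cases hcase : i + k ≤ l
        · rw [hdropapp, List.take_append_of_le_length (by rw [List.length_drop, hlen]; omega)]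
          exact htight i (by omega)
        · have hieq : i = l - (k-1) := by omega
          rw [hdropapp, List.take_of_length_le
            (by rw [List.length_append, List.length_drop, List.length_singleton, hlen]; omega)]
          rw [List.toFinset_append, List.toFinset_cons, List.toFinset_nil]
          have : (L.drop i).toFinset ∪ insert v ∅ = insert v S := by
            rw [hieq, ← hSdef]
            ext a
            simp [or_comm]
          rw [this]
          exact hvmem.2
  exact key (t + k - 1) (by omega) le_rfl
theorem stmt_11 (k : ℕ) (hk : 2 ≤ k) (a : ℝ) (ha : 0 < a) (ha1 : a ≤ 1)
    {V : Type} [Fintype V] [DecidableEq V] (F : Finset (Finset V))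
    (hF : ∀ e ∈ F, e.card = k)
    (hcount : a * ((Fintype.card V).choose k) ≤ (F.card : ℝ)) :
    ∃ L : List V, L.Nodup ∧
      (∀ i : ℕ, i + k ≤ L.length → ((L.drop i).take k).toFinset ∈ F) ∧
      a * (Fintype.card V) / k ≤ (L.length : ℝ) := by
  set m := Fintype.card V with hm
  have hk0 : (0:ℝ) < k := by positivity
  by_cases hmk : m < k
  · -- few vertices: the full vertex list works vacuously
    refine ⟨(univ : Finset V).toList, Finset.nodup_toList _, ?_, ?_⟩
    · intro i hi
      rw [Finset.length_toList, Finset.card_univ, ← hm] at hi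
      omega
    · rw [Finset.length_toList, Finset.card_univ, ← hm]
      rw [div_le_iff₀ hk0]
      have h1 : (0:ℝ) ≤ (m:ℝ) := by positivity
      have h2 : (1:ℝ) ≤ (k:ℝ) := by exact_mod_cast Nat.one_le_of_lt hk
      nlinarith
  · push_neg at hmk
    have hmk1 : ((m - k + 1 : ℕ) : ℝ) = (m:ℝ) - k + 1 := by
      rw [Nat.cast_add, Nat.cast_sub hmk, Nat.cast_one]
    set x : ℝ := a * ((m - k + 1 : ℕ) : ℝ) / k with hxdef
    have hx : 0 < x := by
      rw [hxdef, hmk1]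
      have : (0:ℝ) < (m:ℝ) - k + 1 := by
        have : (k:ℝ) ≤ m := by exact_mod_cast hmk
        linarith
      positivity
    set t : ℕ := ⌈x⌉₊ with htdef
    have ht1 : 1 ≤ t := Nat.ceil_pos.mpr hx
    have htlt : (t : ℝ) < x + 1 := Nat.ceil_lt_add_one hx.le
    have htx : x ≤ (t : ℝ) := Nat.le_ceil x
    -- the binomial identity : k * C(m,k) = C(m,k-1) * (m-k+1)
    have hid : (k : ℕ) * m.choose k = m.choose (k-1) * (m - k + 1) := by
      have h := Nat.choose_succ_right_eq m (k-1)
      have hkk : k - 1 + 1 = k := by omega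
      rw [hkk] at h
      have hmm : m - (k-1) = m - k + 1 := by omega
      rw [hmm] at h
      rw [Nat.mul_comm]; exact h
    have hCpos : (0:ℝ) < (m.choose (k-1) : ℝ) := by
      exact_mod_cast Nat.choose_pos (by omega : k - 1 ≤ m)
    -- the set of active (k-1)-sets
    set A := (((univ : Finset V).powersetCard (k-1)).filter
        (fun S => ∃ e ∈ F, S ⊆ e)) with hAdef
    have hAle : A.card ≤ m.choose (k-1) := by
      calc A.card ≤ ((univ : Finset V).powersetCard (k-1)).card :=
            Finset.card_le_card (Finset.filter_subset _ _)
        _ = m.choose (k-1) := by rw [Finset.card_powersetCard, Finset.card_univ]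
    have hkey : (t - 1) * A.card < F.card := by
      have hc1 : ((t - 1 : ℕ) : ℝ) = (t : ℝ) - 1 := by
        rw [Nat.cast_sub ht1, Nat.cast_one]
      have hstep : ((t - 1 : ℕ) : ℝ) * A.card < (F.card : ℝ) := by
        have h1 : ((t - 1 : ℕ) : ℝ) * A.card ≤ ((t - 1 : ℕ) : ℝ) * (m.choose (k-1) : ℝ) := by
          apply mul_le_mul_of_nonneg_left _ (by positivity)
          exact_mod_cast hAle
        have h2 : ((t - 1 : ℕ) : ℝ) * (m.choose (k-1) : ℝ) < x * (m.choose (k-1) : ℝ) := by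
          apply mul_lt_mul_of_pos_right _ hCpos
          rw [hc1]; linarith
        have h3 : x * (m.choose (k-1) : ℝ) = a * (m.choose k : ℝ) := by
          have hid' : (k : ℝ) * (m.choose k : ℝ) = (m.choose (k-1) : ℝ) * ((m - k + 1 : ℕ) : ℝ) := by
            exact_mod_cast hid
          rw [hxdef, div_mul_eq_mul_div, div_eq_iff hk0.ne']
          linear_combination (-a) * hid'
        calc ((t - 1 : ℕ) : ℝ) * A.card ≤ ((t - 1 : ℕ) : ℝ) * (m.choose (k-1) : ℝ) := h1
          _ < x * (m.choose (k-1) : ℝ) := h2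
          _ = a * (m.choose k : ℝ) := h3
          _ ≤ (F.card : ℝ) := hcount
      exact_mod_cast hstep
    obtain ⟨G', hsubF, hne', hk', hdeg'⟩ :=
      exists_min_deg k t (by omega) F.card F le_rfl hF hkey
    obtain ⟨L, hnd, htight, hlen⟩ := exists_path k t hk ht1 G' hk' hne' hdeg'
    refine ⟨L, hnd, fun i hi => hsubF (htight i hi), ?_⟩
    rw [hlen]
    have hcast : ((t + k - 1 : ℕ) : ℝ) = (t : ℝ) + k - 1 := by
      rw [Nat.cast_sub (by omega), Nat.cast_add, Nat.cast_one]
    rw [hcast, div_le_iff₀ hk0]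
    have hxk : x * k = a * ((m:ℝ) - k + 1) := by
      rw [hxdef, hmk1]; field_simp
    have h2 : (1:ℝ) ≤ (k:ℝ) := by exact_mod_cast Nat.one_le_of_lt hk
    nlinarith [mul_le_mul_of_nonneg_right htx hk0.le]
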